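/- Consider the first-order Sigma-Delta quantization with b-bit alphabet A = {a/(2^b−1) : a = ±1, ±3, …, ±(2^b−1)} applied to a vector z ∈ [−1,1]^m, with random initialization u_0 ∼ U[−1/(2^b−1), 1/(2^b−1)]: q_{k+1} = Q_MSQ(z_{k+1} + u_k), u_{k+1} = u_k + z_{k+1} − q_{k+1}. Then for every k = 0, 1, …, m, conditionally on z, the state variable u_k is uniformly distributed on [−1/(2^b−1), 1/(2^b−1)]. -/
import Mathlib


open MeasureTheory ProbabilityTheory

/-- The b-bit quantization alphabet A = {a/(2^b−1) : a = ±1, ±3, …, ±(2^b−1)}. -/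
def alphabetB (b : ℕ) : Set ℝ :=
  {x | ∃ j : Fin (2 ^ b), x = (2 * (j : ℝ) + 1 - 2 ^ b) / (2 ^ b - 1)}

/-- The uniform distribution on `[−1/(2^b−1), 1/(2^b−1)]`. -/
noncomputable def uniformCell (b : ℕ) : Measure ℝ :=
  (ENNReal.ofReal (2 / ((2 : ℝ) ^ b - 1)))⁻¹ •
    volume.restrict (Set.Icc (-(1 / ((2 : ℝ) ^ b - 1))) (1 / ((2 : ℝ) ^ b - 1)))

section SDaux

private lemma sd_two_le_pow {b : ℕ} (hb : 1 ≤ b) : (2:ℝ) ≤ 2 ^ b := by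
  calc (2:ℝ) = 2^1 := (pow_one 2).symm
  _ ≤ 2^b := pow_le_pow_right₀ one_le_two hb

private lemma sd_pow_int {b : ℕ} (hb : 1 ≤ b) : (2:ℤ)^b = 2 * 2^(b-1) := by
  rw [← pow_succ']; congr 1; omega

/-- membership construction for the alphabet -/
private lemma alphabet_mk {b : ℕ} (hb : 1 ≤ b) (s : ℤ) (hodd : Odd s)
    (hlb : -(2^b - 1) ≤ s) (hub : s ≤ 2^b - 1) :
    (s : ℝ) * (1 / ((2:ℝ)^b - 1)) ∈ alphabetB b := by
  obtain ⟨r, hr⟩ := hodd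
  have hp := sd_pow_int hb
  have hjlt : (r + 2^(b-1)).toNat < 2^b := by
    have h2 : (2^b : ℕ) = 2 * 2^(b-1) := by rw [← pow_succ']; congr 1; omega
    have h3 : ((2^(b-1) : ℕ) : ℤ) = 2^(b-1) := by push_cast; ring
    omega
  refine ⟨⟨(r + 2^(b-1)).toNat, hjlt⟩, ?_⟩
  have hNe : ((2:ℝ)^b - 1) ≠ 0 := by
    have := sd_two_le_pow hb; nlinarith
  have hjval : (((r + 2^(b-1)).toNat : ℤ) : ℝ) = (r : ℝ) + 2^(b-1) := by
    have h0 : 0 ≤ r + 2^(b-1) := by omega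
    rw [Int.toNat_of_nonneg h0]; push_cast; ring
  have hpowR : (2:ℝ)^b = 2 * 2^(b-1) := by rw [← pow_succ']; congr 1; omega
  have hsR : (s : ℝ) = 2 * r + 1 := by rw [hr]; push_cast; ring
  simp only [Fin.val_mk]
  rw [show (((r + 2^(b-1)).toNat : ℕ) : ℝ) = (((r + 2^(b-1)).toNat : ℤ) : ℝ) by push_cast; ring,
    hjval, hsR]
  field_simp
  rw [hpowR]; ring

/-- elimination for the alphabet -/
private lemma alphabet_elim {b : ℕ} (hb : 1 ≤ b) {x : ℝ} (hx : x ∈ alphabetB b) :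
    ∃ s : ℤ, Odd s ∧ -(2^b - 1) ≤ s ∧ s ≤ 2^b - 1 ∧ x = (s : ℝ) * (1 / ((2:ℝ)^b - 1)) := by
  obtain ⟨j, hj⟩ := hx
  have hp := sd_pow_int hb
  have hjb : ((j : ℕ) : ℤ) < (2:ℤ)^b := by exact_mod_cast j.2
  refine ⟨2*(j:ℤ) + 1 - 2^b, ⟨(j:ℤ) - 2^(b-1), by rw [hp]; ring⟩, by omega, by omega, ?_⟩
  have hNe : ((2:ℝ)^b - 1) ≠ 0 := by
    have := sd_two_le_pow hb; nlinarith
  rw [hj]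
  push_cast
  field_simp

private lemma vol_inter_null_ext (s X V : Set ℝ) (hXV : X ⊆ V) (h0 : volume (V \ X) = 0) :
    volume (s ∩ V) = volume (s ∩ X) := by
  apply le_antisymm
  · calc volume (s ∩ V) ≤ volume ((s ∩ X) ∪ (V \ X)) := by
          apply measure_mono
          rintro x ⟨hxs, hxV⟩
          by_cases h : x ∈ X
          · exact Or.inl ⟨hxs, h⟩
          · exact Or.inr ⟨hxV, h⟩
    _ ≤ volume (s ∩ X) + volume (V \ X) := measure_union_le _ _
    _ = volume (s ∩ X) := by rw [h0, add_zero]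
  · exact measure_mono (Set.inter_subset_inter_right s hXV)

end SDaux

section SDstep

/-- One step of Sigma-Delta preserves the uniform distribution on the cell. -/
private lemma sd_step {b : ℕ} (hb : 1 ≤ b) (z : ℝ) (hz : |z| ≤ 1) :
    ∃ f : ℝ → ℝ, Measurable f ∧ Measure.map f (uniformCell b) = uniformCell b ∧
      ∃ E : Set ℝ, MeasurableSet E ∧ uniformCell b E = 0 ∧
        ∀ v ∉ E, ∀ qv ∈ alphabetB b,
          (∀ w ∈ alphabetB b, |z + v - qv| ≤ |z + v - w|) → v + z - qv = f v := by
  set N : ℝ := (2:ℝ)^b - 1 with hNdef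
  have hN1 : (1:ℝ) ≤ N := by rw [hNdef]; have := sd_two_le_pow hb; linarith
  have hNpos : (0:ℝ) < N := by linarith
  set δ : ℝ := 1 / N with hδdef
  have hδpos : 0 < δ := by positivity
  have hNδ : N * δ = 1 := by rw [hδdef]; field_simp
  set t : ℤ := ⌈(z - δ) / (2*δ)⌉ with htdef
  set c : ℝ := 2 * t * δ with hcdef
  have hc1 : z - δ ≤ c := by
    have h := Int.le_ceil ((z - δ) / (2*δ))
    rw [div_le_iff₀ (by linarith : (0:ℝ) < 2*δ)] at h
    rw [hcdef]; linarith
  have hc2 : c < z + δ := by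
    have h := Int.ceil_lt_add_one ((z - δ) / (2*δ))
    rw [← htdef, show (z - δ)/(2*δ) + 1 = (z + δ)/(2*δ) by field_simp; ring] at h
    rw [lt_div_iff₀ (by linarith : (0:ℝ) < 2*δ)] at h
    rw [hcdef]; linarith
  have habs := abs_le.mp hz
  -- integer bounds on t
  have htub : 2 * t ≤ 2^b - 2 := by
    have h1 : 2 * (t:ℝ) * δ < ((2:ℝ)^b) * δ := by
      calc 2 * (t:ℝ) * δ < z + δ := hc2
      _ ≤ 1 + δ := by linarith
      _ = N * δ + δ := by rw [hNδ]
      _ = ((2:ℝ)^b) * δ := by rw [hNdef]; ring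
    have h2 : (2 * (t:ℝ)) < (2:ℝ)^b := lt_of_mul_lt_mul_right h1 hδpos.le
    have h3 : (2 * t : ℤ) < 2^b := by exact_mod_cast h2
    have := sd_pow_int hb
    omega
  have htlb : -(2^b) ≤ 2 * t := by
    have h1 : (-(2:ℝ)^b) * δ ≤ 2 * (t:ℝ) * δ := by
      calc (-(2:ℝ)^b) * δ = -(N*δ) - δ := by rw [hNdef]; ring
      _ = -1 - δ := by rw [hNδ]
      _ ≤ z - δ := by linarith
      _ ≤ c := hc1
      _ = 2 * (t:ℝ) * δ := by rw [hcdef]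
    have h2 : (-(2:ℝ)^b) ≤ 2 * (t:ℝ) := le_of_mul_le_mul_right (by linarith) hδpos
    exact_mod_cast h2
  set θ : ℝ := c - z with hθdef
  have hθ1 : -δ ≤ θ := by rw [hθdef]; linarith
  have hθ2 : θ < δ := by rw [hθdef]; linarith
  set f : ℝ → ℝ := fun v => if c < z + v then z + v - c - δ else z + v - c + δ with hfdef
  have hfm : Measurable f := by
    apply Measurable.ite
    · exact measurableSet_lt measurable_const (measurable_const.add measurable_id)
    · fun_prop
    · fun_prop
  refine ⟨f, hfm, ?_, ?_⟩
  · -- measure preservation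
    have key : Measure.map f (volume.restrict (Set.Icc (-δ) δ))
        = volume.restrict (Set.Icc (-δ) δ) := by
      ext s hs
      rw [Measure.map_apply hfm hs, Measure.restrict_apply (hfm hs), Measure.restrict_apply hs]
      set A : Set ℝ := Set.Ioc θ δ with hAdef
      set B : Set ℝ := Set.Ico (-δ) θ with hBdef
      have hABsub : A ∪ B ⊆ Set.Icc (-δ) δ := by
        rintro x (⟨h1, h2⟩ | ⟨h1, h2⟩)
        · exact ⟨by linarith, h2⟩
        · exact ⟨h1, by linarith⟩
      have hABnull : volume (Set.Icc (-δ) δ \ (A ∪ B)) = 0 := by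
        refine measure_mono_null ?_ ((Set.countable_singleton θ).measure_zero _)
        rintro x ⟨⟨hx1, hx2⟩, hx3⟩
        simp only [Set.mem_union, hAdef, hBdef, Set.mem_Ioc, Set.mem_Ico, not_or,
          not_and_or, not_lt, not_le] at hx3
        obtain ⟨h4, h5⟩ := hx3
        have : x = θ := by
          rcases h4 with h4 | h4
          · rcases h5 with h5 | h5
            · linarith
            · linarith
          · linarith
        exact this
      have step1 : volume (f ⁻¹' s ∩ Set.Icc (-δ) δ) = volume (f ⁻¹' s ∩ (A ∪ B)) :=
        vol_inter_null_ext _ _ _ hABsub hABnull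
      have hdisj : Disjoint (f ⁻¹' s ∩ A) (f ⁻¹' s ∩ B) := by
        refine Set.disjoint_left.mpr ?_
        rintro x ⟨-, hxA⟩ ⟨-, hxB⟩
        exact absurd hxB.2 (not_lt.mpr hxA.1.le)
      have step2 : volume (f ⁻¹' s ∩ (A ∪ B))
          = volume (f ⁻¹' s ∩ A) + volume (f ⁻¹' s ∩ B) := by
        rw [Set.inter_union_distrib_left]
        exact measure_union hdisj ((hfm hs).inter measurableSet_Ico)
      have step3 : volume (f ⁻¹' s ∩ A) = volume (s ∩ Set.Ioc (-δ) (-θ)) := by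
        have hfA : f ⁻¹' s ∩ A = (fun x => x + (-(θ + δ))) ⁻¹' (s ∩ Set.Ioc (-δ) (-θ)) := by
          ext x
          simp only [Set.mem_inter_iff, Set.mem_preimage, hAdef, Set.mem_Ioc]
          constructor
          · rintro ⟨hxs, hx1, hx2⟩
            have hcond : c < z + x := by rw [hθdef] at hx1; linarith
            have hfx : f x = x + (-(θ + δ)) := by
              simp only [hfdef, if_pos hcond, hθdef]; ring
            refine ⟨hfx ▸ hxs, by linarith, by linarith⟩
          · rintro ⟨hxs, hx1, hx2⟩
            have hx1' : θ < x := by linarith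
            have hx2' : x ≤ δ := by linarith
            have hcond : c < z + x := by rw [hθdef] at hx1'; linarith
            have hfx : f x = x + (-(θ + δ)) := by
              simp only [hfdef, if_pos hcond, hθdef]; ring
            exact ⟨hfx ▸ hxs, hx1', hx2'⟩
        rw [hfA, measure_preimage_add_right]
      have step4 : volume (f ⁻¹' s ∩ B) = volume (s ∩ Set.Ico (-θ) δ) := by
        have hfB : f ⁻¹' s ∩ B = (fun x => x + (δ - θ)) ⁻¹' (s ∩ Set.Ico (-θ) δ) := by
          ext x
          simp only [Set.mem_inter_iff, Set.mem_preimage, hBdef, Set.mem_Ico]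
          constructor
          · rintro ⟨hxs, hx1, hx2⟩
            have hcond : ¬ (c < z + x) := by rw [hθdef] at hx2; push_neg; linarith
            have hfx : f x = x + (δ - θ) := by
              simp only [hfdef, if_neg hcond, hθdef]; ring
            refine ⟨hfx ▸ hxs, by linarith, by linarith⟩
          · rintro ⟨hxs, hx1, hx2⟩
            have hx1' : -δ ≤ x := by linarith
            have hx2' : x < θ := by linarith
            have hcond : ¬ (c < z + x) := by rw [hθdef] at hx2'; push_neg; linarith
            have hfx : f x = x + (δ - θ) := by
              simp only [hfdef, if_neg hcond, hθdef]; ring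
            exact ⟨hfx ▸ hxs, hx1', hx2'⟩
        rw [hfB, measure_preimage_add_right]
      rw [step1, step2, step3, step4]
      -- now combine the two pieces on the right
      have hXY := measure_union_add_inter (μ := volume) (s ∩ Set.Ioc (-δ) (-θ))
        (hs.inter measurableSet_Ico : MeasurableSet (s ∩ Set.Ico (-θ) δ))
      have hinter : volume ((s ∩ Set.Ioc (-δ) (-θ)) ∩ (s ∩ Set.Ico (-θ) δ)) = 0 := by
        refine measure_mono_null ?_ ((Set.countable_singleton (-θ)).measure_zero _)
        rintro x ⟨⟨-, -, hx2⟩, ⟨-, hx3, -⟩⟩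
        exact le_antisymm hx2 hx3
      have hunion : (s ∩ Set.Ioc (-δ) (-θ)) ∪ (s ∩ Set.Ico (-θ) δ)
          = s ∩ (Set.Ioc (-δ) (-θ) ∪ Set.Ico (-θ) δ) := (Set.inter_union_distrib_left _ _ _).symm
      have hUsub : Set.Ioc (-δ) (-θ) ∪ Set.Ico (-θ) δ ⊆ Set.Icc (-δ) δ := by
        rintro x (⟨h1, h2⟩ | ⟨h1, h2⟩)
        · exact ⟨h1.le, by linarith⟩
        · exact ⟨by linarith, h2.le⟩
      have hUnull : volume (Set.Icc (-δ) δ \ (Set.Ioc (-δ) (-θ) ∪ Set.Ico (-θ) δ)) = 0 := by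
        refine measure_mono_null ?_
          (((Set.countable_singleton δ).insert (-δ)).measure_zero _)
        rintro x ⟨⟨hx1, hx2⟩, hx3⟩
        simp only [Set.mem_union, Set.mem_Ioc, Set.mem_Ico, not_or, not_and_or,
          not_lt, not_le] at hx3
        obtain ⟨h4, h5⟩ := hx3
        simp only [Set.mem_insert_iff, Set.mem_singleton_iff]
        rcases h4 with h4 | h4
        · left; linarith
        · rcases h5 with h5 | h5
          · linarith
          · right; linarith
      have hUfull : volume (s ∩ (Set.Ioc (-δ) (-θ) ∪ Set.Ico (-θ) δ))
          = volume (s ∩ Set.Icc (-δ) δ) :=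
        (vol_inter_null_ext s _ _ hUsub hUnull).symm
      rw [hinter, add_zero, hunion, hUfull] at hXY
      exact hXY.symm
    have hUC : uniformCell b = (ENNReal.ofReal (2 / N))⁻¹ • volume.restrict (Set.Icc (-δ) δ) := by
      rw [uniformCell, ← hNdef, ← hδdef]
    rw [hUC, Measure.map_smul, key]
  · -- the exceptional set and pointwise identification
    refine ⟨(Set.Ioo (-δ) δ)ᶜ ∪ {θ}, (measurableSet_Ioo.compl).union (measurableSet_singleton θ),
      ?_, ?_⟩
    · -- null
      have hUC : uniformCell b
          = (ENNReal.ofReal (2 / N))⁻¹ • volume.restrict (Set.Icc (-δ) δ) := by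
        rw [uniformCell, ← hNdef, ← hδdef]
      rw [hUC]
      simp only [Measure.smul_apply, smul_eq_mul]
      have h0 : volume.restrict (Set.Icc (-δ) δ) ((Set.Ioo (-δ) δ)ᶜ ∪ {θ}) = 0 := by
        rw [Measure.restrict_apply' measurableSet_Icc]
        refine measure_mono_null ?_
          ((((Set.countable_singleton θ).insert δ).insert (-δ)).measure_zero _)
        rintro x ⟨hx1, hx2, hx3⟩
        simp only [Set.mem_insert_iff, Set.mem_singleton_iff]
        rcases hx1 with hx1 | hx1
        · simp only [Set.mem_compl_iff, Set.mem_Ioo, not_and_or, not_lt] at hx1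
          rcases hx1 with h | h
          · left; linarith
          · right; left; linarith
        · right; right; exact hx1
      rw [h0, mul_zero]
    · -- pointwise
      intro v hv qv hqv hmin
      simp only [Set.mem_union, Set.mem_compl_iff, Set.mem_Ioo, Set.mem_singleton_iff,
        not_or] at hv
      obtain ⟨hvIoo, hvθ⟩ := hv
      rw [not_not] at hvIoo
      obtain ⟨hv1, hv2⟩ := hvIoo
      set y : ℝ := z + v with hydef
      have hyne : y ≠ c := by
        intro h
        apply hvθ
        rw [hθdef]
        linarith [h, hydef]
      rcases lt_or_gt_of_ne hyne with hyc | hyc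
      · -- y < c : quantize to c - δ
        have hclb : -(2^b) + 2 ≤ 2*t := by
          have h2 : (-(2:ℝ)^b) * δ < 2 * (t:ℝ) * δ := by
            calc (-(2:ℝ)^b) * δ = -(N*δ) - δ := by rw [hNdef]; ring
            _ = -1 - δ := by rw [hNδ]
            _ ≤ z - δ := by linarith
            _ < y := by rw [hydef]; linarith
            _ < c := hyc
            _ = 2 * (t:ℝ) * δ := by rw [hcdef]
          have h3 : (-(2:ℝ)^b) < 2 * (t:ℝ) := lt_of_mul_lt_mul_right h2 hδpos.le
          have h4 : (-(2^b) : ℤ) < 2*t := by exact_mod_cast h3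
          have := sd_pow_int hb
          omega
        have hp : ((2*t - 1 : ℤ) : ℝ) * (1 / ((2:ℝ)^b - 1)) ∈ alphabetB b :=
          alphabet_mk hb (2*t-1) ⟨t-1, by ring⟩ (by have := sd_pow_int hb; omega)
            (by have := sd_pow_int hb; omega)
        have hpval : ((2*t - 1 : ℤ) : ℝ) * (1 / ((2:ℝ)^b - 1)) = c - δ := by
          rw [← hNdef, ← hδdef, hcdef]; push_cast; ring
        rw [hpval] at hp
        have hygt : c - 2*δ < y := by rw [hydef]; linarith
        have hynear : |y - (c - δ)| < δ := by
          rw [abs_lt]; constructor <;> [linarith; linarith]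
        have hqeq : qv = c - δ := by
          by_contra hne
          obtain ⟨sq, hsqodd, hsqlb, hsqub, hsqval⟩ := alphabet_elim hb hqv
          have hfar : δ < |y - qv| := by
            have hsne : sq ≠ 2*t - 1 := by
              intro h
              apply hne
              rw [hsqval, h, ← hNdef, ← hδdef, hcdef]
              push_cast; ring
            obtain ⟨r, hr⟩ := hsqodd
            have hcases : sq ≤ 2*t - 3 ∨ 2*t + 1 ≤ sq := by omega
            rcases hcases with h | h
            · have hw : qv ≤ c - 3*δ := by
                rw [hsqval, ← hNdef, ← hδdef]
                calc (sq:ℝ) * δ ≤ ((2*t - 3 : ℤ):ℝ) * δ := by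
                      apply mul_le_mul_of_nonneg_right _ hδpos.le
                      exact_mod_cast h
                _ = c - 3*δ := by rw [hcdef]; push_cast; ring
              rw [abs_of_nonneg (by linarith)]
              linarith
            · have hw : c + δ ≤ qv := by
                rw [hsqval, ← hNdef, ← hδdef]
                calc c + δ = ((2*t + 1 : ℤ):ℝ) * δ := by rw [hcdef]; push_cast; ring
                _ ≤ (sq:ℝ) * δ := by
                      apply mul_le_mul_of_nonneg_right _ hδpos.le
                      exact_mod_cast h
              rw [abs_of_nonpos (by linarith)]
              linarith
          have hle := hmin (c - δ) hp
          linarith [lt_of_le_of_lt hle hynear]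
        have hcond : ¬ (c < z + v) := by push_neg; rw [← hydef]; linarith
        rw [hqeq]
        simp only [hfdef, if_neg hcond]
        ring
      · -- y > c : quantize to c + δ
        have hp : ((2*t + 1 : ℤ) : ℝ) * (1 / ((2:ℝ)^b - 1)) ∈ alphabetB b :=
          alphabet_mk hb (2*t+1) ⟨t, by ring⟩ (by have := sd_pow_int hb; omega)
            (by have := sd_pow_int hb; omega)
        have hpval : ((2*t + 1 : ℤ) : ℝ) * (1 / ((2:ℝ)^b - 1)) = c + δ := by
          rw [← hNdef, ← hδdef, hcdef]; push_cast; ring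
        rw [hpval] at hp
        have hylt : y < c + 2*δ := by rw [hydef]; linarith
        have hynear : |y - (c + δ)| < δ := by
          rw [abs_lt]; constructor <;> [linarith; linarith]
        have hqeq : qv = c + δ := by
          by_contra hne
          obtain ⟨sq, hsqodd, hsqlb, hsqub, hsqval⟩ := alphabet_elim hb hqv
          have hfar : δ < |y - qv| := by
            have hsne : sq ≠ 2*t + 1 := by
              intro h
              apply hne
              rw [hsqval, h, ← hNdef, ← hδdef, hcdef]
              push_cast; ring
            obtain ⟨r, hr⟩ := hsqodd
            have hcases : sq ≤ 2*t - 1 ∨ 2*t + 3 ≤ sq := by omega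
            rcases hcases with h | h
            · have hw : qv ≤ c - δ := by
                rw [hsqval, ← hNdef, ← hδdef]
                calc (sq:ℝ) * δ ≤ ((2*t - 1 : ℤ):ℝ) * δ := by
                      apply mul_le_mul_of_nonneg_right _ hδpos.le
                      exact_mod_cast h
                _ = c - δ := by rw [hcdef]; push_cast; ring
              rw [abs_of_nonneg (by linarith)]
              linarith
            · have hw : c + 3*δ ≤ qv := by
                rw [hsqval, ← hNdef, ← hδdef]
                calc c + 3*δ = ((2*t + 3 : ℤ):ℝ) * δ := by rw [hcdef]; push_cast; ring
                _ ≤ (sq:ℝ) * δ := by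
                      apply mul_le_mul_of_nonneg_right _ hδpos.le
                      exact_mod_cast h
              rw [abs_of_nonpos (by linarith)]
              linarith
          have hle := hmin (c + δ) hp
          linarith [lt_of_le_of_lt hle hynear]
        have hcond : c < z + v := by rw [← hydef]; exact hyc
        rw [hqeq]
        simp only [hfdef, if_pos hcond]
        ring

end SDstep

/-- Invariance of the uniform distribution of the state variable under first-order
Sigma-Delta quantization with randomized initialization (Lemma D.1). -/
theorem stmt_12
    {Ω : Type*} [MeasureSpace Ω] [IsProbabilityMeasure (ℙ : Measure Ω)]
    (b m : ℕ) (hb : 1 ≤ b)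
    (z : ℕ → ℝ) (hz : ∀ k, 1 ≤ k → k ≤ m → |z k| ≤ 1)
    (u : ℕ → Ω → ℝ) (q : ℕ → Ω → ℝ)
    (humeas : ∀ k, Measurable (u k))
    -- u_0 ~ U[−1/(2^b−1), 1/(2^b−1)]
    (hu0 : Measure.map (u 0) ℙ = uniformCell b)
    -- q_k = Q_MSQ(z_k + u_{k−1}): nearest alphabet element
    (hqmem : ∀ k, 1 ≤ k → k ≤ m → ∀ a, q k a ∈ alphabetB b)
    (hqnear : ∀ k, 1 ≤ k → k ≤ m → ∀ a, ∀ w ∈ alphabetB b,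
      |z k + u (k - 1) a - q k a| ≤ |z k + u (k - 1) a - w|)
    -- u_k = u_{k−1} + z_k − q_k
    (hurec : ∀ k, 1 ≤ k → k ≤ m → ∀ a, u k a = u (k - 1) a + z k - q k a) :
    ∀ k ≤ m, Measure.map (u k) (ℙ : Measure Ω) = uniformCell b := by
  intro k
  induction k with
  | zero => intro _; exact hu0
  | succ k ih =>
    intro hk
    have hk' : k ≤ m := le_trans (Nat.le_succ k) hk
    have IH := ih hk'
    have hk1 : 1 ≤ k + 1 := Nat.le_add_left 1 k
    obtain ⟨f, hfm, hfmap, E, hEm, hE0, hpt⟩ := sd_step hb (z (k+1)) (hz (k+1) hk1 hk)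
    have hnull : ℙ ((u k) ⁻¹' E) = 0 := by
      rw [← Measure.map_apply (humeas k) hEm, IH]; exact hE0
    have hae : u (k+1) =ᵐ[ℙ] f ∘ u k := by
      have h1 : ∀ᵐ a ∂(ℙ : Measure Ω), u k a ∉ E := (measure_eq_zero_iff_ae_notMem).mp hnull
      filter_upwards [h1] with a ha
      have hrec := hurec (k+1) hk1 hk a
      have hmem := hqmem (k+1) hk1 hk a
      have hnear := hqnear (k+1) hk1 hk a
      simp only [Nat.add_sub_cancel] at hrec hmem hnear
      have hid := hpt (u k a) ha (q (k+1) a) hmem hnear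
      simp only [Function.comp_apply]
      rw [hrec, ← hid]
    rw [Measure.map_congr hae, ← Measure.map_map hfm (humeas k), IH, hfmap]
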